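/- Let Ω be a bounded open strictly convex subset of Rⁿ with the Hilbert metric, and K a closed convex subset of Ω. Then for every x ∈ Ω there exists a unique point of K closest to x, and the resulting closest point projection map Ω → K is continuous. -/

import Mathlib

open Metric Set Filter

namespace HilbertAux

variable {n : ℕ}

/-- The body translated so that `p` becomes the origin (as a preimage). -/
def tset (Ω : Set (EuclideanSpace ℝ (Fin n))) (p : EuclideanSpace ℝ (Fin n)) :
    Set (EuclideanSpace ℝ (Fin n)) := (fun v => p + v) ⁻¹' Ω

variable {Ω : Set (EuclideanSpace ℝ (Fin n))} {p q v : EuclideanSpace ℝ (Fin n)}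

lemma mem_tset : v ∈ tset Ω p ↔ p + v ∈ Ω := Iff.rfl

lemma tset_eq_homeo : tset Ω p = (Homeomorph.addLeft p) ⁻¹' Ω := rfl

lemma tset_isOpen (hΩo : IsOpen Ω) : IsOpen (tset Ω p) :=
  hΩo.preimage (continuous_const.add continuous_id)

lemma tset_convex (hΩc : Convex ℝ Ω) : Convex ℝ (tset Ω p) := by
  intro u hu w hw a b ha hb hab
  have h : p + (a • u + b • w) = a • (p + u) + b • (p + w) := by
    rw [smul_add, smul_add]
    rw [show a • p + a • u + (b • p + b • w) = (a • p + b • p) + (a • u + b • w) by abel,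
      ← add_smul, hab, one_smul]
  exact mem_tset.2 (h ▸ hΩc hu hw ha hb hab)

lemma tset_mem_nhds (hΩo : IsOpen Ω) (hp : p ∈ Ω) : tset Ω p ∈ nhds (0 : EuclideanSpace ℝ (Fin n)) :=
  (tset_isOpen hΩo).mem_nhds (by simpa [mem_tset] using hp)

lemma tset_closure : closure (tset Ω p) = (fun v => p + v) ⁻¹' closure Ω :=
  ((Homeomorph.addLeft p).preimage_closure Ω).symm

lemma tset_frontier : frontier (tset Ω p) = (fun v => p + v) ⁻¹' frontier Ω :=
  ((Homeomorph.addLeft p).preimage_frontier Ω).symm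

lemma tset_subset_closedBall {C : ℝ} (hC : Ω ⊆ closedBall 0 C) (hp : p ∈ Ω) :
    tset Ω p ⊆ closedBall 0 (2 * C) := by
  intro w hw
  have h1 : ‖p + w‖ ≤ C := by simpa [mem_closedBall, dist_zero_right] using hC hw
  have h2 : ‖p‖ ≤ C := by simpa [mem_closedBall, dist_zero_right] using hC hp
  have : ‖w‖ ≤ 2 * C := by
    calc ‖w‖ = ‖(p + w) - p‖ := by rw [add_sub_cancel_left]
    _ ≤ ‖p + w‖ + ‖p‖ := norm_sub_le _ _
    _ ≤ 2 * C := by linarith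
  simpa [mem_closedBall, dist_zero_right]

lemma norm_div_le_gauge {C : ℝ} (hΩo : IsOpen Ω) (hC : Ω ⊆ closedBall 0 C) (hC0 : 0 < C)
    (hp : p ∈ Ω) (v : EuclideanSpace ℝ (Fin n)) :
    ‖v‖ / (2 * C) ≤ gauge (tset Ω p) v :=
  le_gauge_of_subset_closedBall (absorbent_nhds_zero (tset_mem_nhds hΩo hp)) (by linarith)
    (tset_subset_closedBall hC hp)

lemma gauge_lt_one_of_mem (hΩo : IsOpen Ω) (hq : q ∈ Ω) :
    gauge (tset Ω p) (q - p) < 1 :=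
  gauge_lt_one_of_mem_of_isOpen (tset_isOpen hΩo) (by simp [mem_tset, hq])

lemma mem_of_gauge_lt_one (hΩo : IsOpen Ω) (hΩc : Convex ℝ Ω) (hp : p ∈ Ω)
    (h : gauge (tset Ω p) (q - p) < 1) : q ∈ Ω := by
  have := gauge_lt_one_iff_mem_interior (tset_convex hΩc) (tset_mem_nhds hΩo hp) |>.1 h
  rw [(tset_isOpen hΩo (p := p)).interior_eq] at this
  simpa [mem_tset] using this


lemma gauge_lt_elim (hΩo : IsOpen Ω) (hp : p ∈ Ω) {c : ℝ}
    (h : gauge (tset Ω p) v < c) : ∃ r, 0 < r ∧ r < c ∧ p + r⁻¹ • v ∈ Ω := by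
  obtain ⟨r, hr0, hrc, hvr⟩ :=
    exists_lt_of_gauge_lt (absorbent_nhds_zero (tset_mem_nhds hΩo hp)) h
  exact ⟨r, hr0, hrc, by
    have := (mem_smul_set_iff_inv_smul_mem₀ hr0.ne' _ _).1 hvr
    simpa [mem_tset] using this⟩

lemma gauge_le_intro {r : ℝ} (hr : 0 < r) (h : p + r⁻¹ • v ∈ Ω) :
    gauge (tset Ω p) v ≤ r :=
  gauge_le_of_mem hr.le ((mem_smul_set_iff_inv_smul_mem₀ hr.ne' _ _).2 (by simpa [mem_tset]))

lemma mem_closure_of_gauge_le (hΩo : IsOpen Ω) (hΩc : Convex ℝ Ω) (hp : p ∈ Ω) {c : ℝ}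
    (hc : 0 < c) (h : gauge (tset Ω p) v ≤ c) : p + c⁻¹ • v ∈ closure Ω := by
  have h1 : gauge (tset Ω p) (c⁻¹ • v) ≤ 1 := by
    rw [gauge_smul_of_nonneg (inv_nonneg.2 hc.le), smul_eq_mul, inv_mul_le_iff₀ hc]
    simpa using h
  have h2 := (gauge_le_one_iff_mem_closure (tset_convex hΩc) (tset_mem_nhds hΩo hp)).1 h1
  rw [tset_closure] at h2
  exact h2

lemma gauge_le_of_mem_closure (hΩo : IsOpen Ω) (hΩc : Convex ℝ Ω) (hp : p ∈ Ω) {c : ℝ}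
    (hc : 0 < c) (h : p + c⁻¹ • v ∈ closure Ω) : gauge (tset Ω p) v ≤ c := by
  have h1 : gauge (tset Ω p) (c⁻¹ • v) ≤ 1 := by
    rw [gauge_le_one_iff_mem_closure (tset_convex hΩc) (tset_mem_nhds hΩo hp), tset_closure]
    exact h
  rw [gauge_smul_of_nonneg (inv_nonneg.2 hc.le), smul_eq_mul, inv_mul_le_iff₀ hc, mul_one] at h1
  exact h1

lemma lt_gauge_of_not_mem_closure (hΩo : IsOpen Ω) (hΩc : Convex ℝ Ω) (hp : p ∈ Ω) {c : ℝ}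
    (hc : 0 < c) (h : p + c⁻¹ • v ∉ closure Ω) : c < gauge (tset Ω p) v := by
  by_contra hle
  exact h (mem_closure_of_gauge_le hΩo hΩc hp hc (not_lt.1 hle))

/-- Joint sequential continuity of the gauge in the base point and the vector. -/
lemma tendsto_gauge (hΩo : IsOpen Ω) (hΩc : Convex ℝ Ω) (hp : p ∈ Ω)
    {pk vk : ℕ → EuclideanSpace ℝ (Fin n)}
    (hpk : Tendsto pk atTop (nhds p)) (hvk : Tendsto vk atTop (nhds v)) :
    Tendsto (fun k => gauge (tset Ω (pk k)) (vk k)) atTop (nhds (gauge (tset Ω p) v)) := by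
  have hpkΩ : ∀ᶠ k in atTop, pk k ∈ Ω := hpk.eventually (hΩo.eventually_mem hp)
  rw [tendsto_order]
  constructor
  · intro c hc
    rcases lt_or_ge c 0 with hc0 | hc0
    · exact Eventually.of_forall fun k => lt_of_lt_of_le hc0 (gauge_nonneg _)
    · set L := gauge (tset Ω p) v with hL
      have hcL : c < L := hc
      set c' : ℝ := (c + L) / 2 with hc'
      have hc'0 : 0 < c' := by simp only [hc']; linarith
      have hc'L : c' < L := by simp only [hc']; linarith
      have hnot : p + c'⁻¹ • v ∉ closure Ω := fun hmem =>
        absurd (gauge_le_of_mem_closure hΩo hΩc hp hc'0 hmem) (not_le.2 hc'L)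
      have hconv : Tendsto (fun k => pk k + c'⁻¹ • vk k) atTop (nhds (p + c'⁻¹ • v)) :=
        hpk.add (hvk.const_smul _)
      have hev : ∀ᶠ k in atTop, pk k + c'⁻¹ • vk k ∉ closure Ω :=
        hconv.eventually (isClosed_closure.isOpen_compl.eventually_mem hnot)
      filter_upwards [hev, hpkΩ] with k hk hkΩ
      exact lt_trans (by simp only [hc']; linarith)
        (lt_gauge_of_not_mem_closure hΩo hΩc hkΩ hc'0 hk)
  · intro c hc
    obtain ⟨r, hr0, hrc, hmem⟩ := gauge_lt_elim hΩo hp hc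
    have hconv : Tendsto (fun k => pk k + r⁻¹ • vk k) atTop (nhds (p + r⁻¹ • v)) :=
      hpk.add (hvk.const_smul _)
    filter_upwards [hconv.eventually (hΩo.eventually_mem hmem)] with k hk
    exact lt_of_le_of_lt (gauge_le_intro hr0 hk) hrc



/-- Explicit formula for the Hilbert distance in terms of gauges. -/
noncomputable def hd (Ω : Set (EuclideanSpace ℝ (Fin n))) (p q : EuclideanSpace ℝ (Fin n)) : ℝ :=
  (1/2) * Real.log ((1 + gauge (tset Ω p) (p - q)) / (1 - gauge (tset Ω p) (q - p)))

lemma hd_self : hd Ω p p = 0 := by simp [hd]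

lemma one_sub_gauge_pos (hΩo : IsOpen Ω) (hq : q ∈ Ω) :
    0 < 1 - gauge (tset Ω p) (q - p) :=
  sub_pos.2 (gauge_lt_one_of_mem hΩo hq)

lemma ratio_ge_one (hΩo : IsOpen Ω) (hq : q ∈ Ω) :
    1 ≤ (1 + gauge (tset Ω p) (p - q)) / (1 - gauge (tset Ω p) (q - p)) := by
  rw [le_div_iff₀ (one_sub_gauge_pos hΩo hq)]
  have h1 := gauge_nonneg (s := tset Ω p) (p - q)
  have h2 := gauge_nonneg (s := tset Ω p) (q - p)
  linarith

lemma hd_nonneg (hΩo : IsOpen Ω) (hq : q ∈ Ω) : 0 ≤ hd Ω p q := by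
  have := Real.log_nonneg (ratio_ge_one hΩo hq (p := p))
  simp only [hd]; linarith

lemma exp_two_hd (hΩo : IsOpen Ω) (hq : q ∈ Ω) :
    Real.exp (2 * hd Ω p q)
      = (1 + gauge (tset Ω p) (p - q)) / (1 - gauge (tset Ω p) (q - p)) := by
  have hpos : 0 < (1 + gauge (tset Ω p) (p - q)) / (1 - gauge (tset Ω p) (q - p)) :=
    lt_of_lt_of_le one_pos (ratio_ge_one hΩo hq)
  rw [hd, show (2 : ℝ) * ((1/2) * Real.log _) = Real.log _ by ring, Real.exp_log hpos]


/-- The cross-ratio hypothesis pins down `dΩ` to equal `hd`. -/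
lemma dist_eq_hd (hΩo : IsOpen Ω) (hΩb : Bornology.IsBounded Ω) (hΩc : Convex ℝ Ω)
    (dΩ : EuclideanSpace ℝ (Fin n) → EuclideanSpace ℝ (Fin n) → ℝ)
    (hcr : ∀ x ∈ Ω, ∀ y ∈ Ω, ∀ a b : EuclideanSpace ℝ (Fin n),
      a ∈ frontier Ω → b ∈ frontier Ω → x ≠ y →
      x ∈ segment ℝ a y → y ∈ segment ℝ x b →
      dΩ x y = (1/2) * |Real.log ((dist a y * dist b x) / (dist a x * dist b y))|)
    (hd0 : ∀ x ∈ Ω, dΩ x x = 0)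
    (hp : p ∈ Ω) (hq : q ∈ Ω) : dΩ p q = hd Ω p q := by
  by_cases hpq : p = q
  · subst hpq; rw [hd_self, hd0 p hp]
  obtain ⟨C, hC0, hC⟩ := hΩb.subset_closedBall_lt 0 0
  set v : EuclideanSpace ℝ (Fin n) := q - p with hv_def
  have hv : v ≠ 0 := sub_ne_zero.2 (Ne.symm hpq)
  have hvn : 0 < ‖v‖ := norm_pos_iff.2 hv
  set gb : ℝ := gauge (tset Ω p) v with hgb_def
  set ga : ℝ := gauge (tset Ω p) (-v) with hga_def
  have hga0 : 0 < ga := by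
    have h := norm_div_le_gauge hΩo hC hC0 hp (-v)
    rw [norm_neg] at h
    exact lt_of_lt_of_le (by positivity) h
  have hgb0 : 0 < gb := lt_of_lt_of_le (by positivity) (norm_div_le_gauge hΩo hC hC0 hp v)
  have hgb1 : gb < 1 := gauge_lt_one_of_mem hΩo hq
  have hgbi1 : 1 < gb⁻¹ := (one_lt_inv₀ hgb0).2 hgb1
  set b : EuclideanSpace ℝ (Fin n) := p + gb⁻¹ • v with hb_def
  set a : EuclideanSpace ℝ (Fin n) := p + ga⁻¹ • (-v) with ha_def
  have hbf : b ∈ frontier Ω := by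
    have h1 : gauge (tset Ω p) (gb⁻¹ • v) = 1 := by
      rw [gauge_smul_of_nonneg (inv_nonneg.2 hgb0.le), smul_eq_mul, ← hgb_def,
        inv_mul_cancel₀ hgb0.ne']
    have := (gauge_eq_one_iff_mem_frontier (tset_convex hΩc) (tset_mem_nhds hΩo hp)).1 h1
    rw [tset_frontier] at this
    exact this
  have haf : a ∈ frontier Ω := by
    have h1 : gauge (tset Ω p) (ga⁻¹ • (-v)) = 1 := by
      rw [gauge_smul_of_nonneg (inv_nonneg.2 hga0.le), smul_eq_mul, ← hga_def,
        inv_mul_cancel₀ hga0.ne']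
    have := (gauge_eq_one_iff_mem_frontier (tset_convex hΩc) (tset_mem_nhds hΩo hp)).1 h1
    rw [tset_frontier] at this
    exact this
  have hseg2 : q ∈ segment ℝ p b := by
    refine ⟨1 - gb, gb, by linarith, hgb0.le, by ring, ?_⟩
    rw [hb_def, hv_def]
    match_scalars <;> field_simp <;> ring
  have hseg1 : p ∈ segment ℝ a q := by
    have h1 : (0:ℝ) < 1 + ga := by linarith
    refine ⟨ga / (1 + ga), 1 / (1 + ga), by positivity, by positivity, by field_simp; ring, ?_⟩
    rw [ha_def, hv_def]
    match_scalars <;> field_simp <;> ring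
  have key := hcr p hp q hq a b haf hbf hpq hseg1 hseg2
  have hdaq : dist a q = (ga⁻¹ + 1) * ‖v‖ := by
    rw [dist_eq_norm]
    have : a - q = -((ga⁻¹ + 1) • v) := by rw [ha_def, hv_def]; module
    rw [this, norm_neg, norm_smul, Real.norm_of_nonneg (by positivity)]
  have hdbp : dist b p = gb⁻¹ * ‖v‖ := by
    rw [dist_eq_norm]
    have : b - p = gb⁻¹ • v := by rw [hb_def]; module
    rw [this, norm_smul, Real.norm_of_nonneg (by positivity)]
  have hdap : dist a p = ga⁻¹ * ‖v‖ := by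
    rw [dist_eq_norm]
    have : a - p = -(ga⁻¹ • v) := by rw [ha_def]; module
    rw [this, norm_neg, norm_smul, Real.norm_of_nonneg (by positivity)]
  have hdbq : dist b q = (gb⁻¹ - 1) * ‖v‖ := by
    rw [dist_eq_norm]
    have : b - q = (gb⁻¹ - 1) • v := by rw [hb_def, hv_def]; module
    rw [this, norm_smul, Real.norm_of_nonneg (by linarith)]
  have hratio : (dist a q * dist b p) / (dist a p * dist b q) = (1 + ga) / (1 - gb) := by
    rw [hdaq, hdbp, hdap, hdbq]
    have hne1 : (ga⁻¹ * ‖v‖) * ((gb⁻¹ - 1) * ‖v‖) ≠ 0 := by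
      have : (0:ℝ) < gb⁻¹ - 1 := by linarith
      positivity
    have hne2 : (1:ℝ) - gb ≠ 0 := by linarith
    rw [div_eq_div_iff hne1 hne2]
    field_simp
  have hgpq : gauge (tset Ω p) (p - q) = ga := by rw [hga_def, hv_def]; congr 1; abel
  rw [key, hratio, hd, hgpq, ← hv_def, ← hgb_def,
    abs_of_nonneg (Real.log_nonneg (by
      rw [le_div_iff₀ (by linarith)]; linarith))]

lemma gauge_convex_combo (hΩo : IsOpen Ω) (hΩc : Convex ℝ Ω) (hp : p ∈ Ω)
    {u w : EuclideanSpace ℝ (Fin n)} {s t : ℝ} (hs : 0 ≤ s) (ht : 0 ≤ t) :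
    gauge (tset Ω p) (s • u + t • w)
      ≤ s * gauge (tset Ω p) u + t * gauge (tset Ω p) w := by
  calc gauge (tset Ω p) (s • u + t • w)
      ≤ gauge (tset Ω p) (s • u) + gauge (tset Ω p) (t • w) :=
        gauge_add_le (tset_convex hΩc) (absorbent_nhds_zero (tset_mem_nhds hΩo hp)) _ _
    _ = s * gauge (tset Ω p) u + t * gauge (tset Ω p) w := by
        rw [gauge_smul_of_nonneg hs, gauge_smul_of_nonneg ht, smul_eq_mul, smul_eq_mul]

lemma tendsto_hd (hΩo : IsOpen Ω) (hΩc : Convex ℝ Ω) (hp : p ∈ Ω) (hq : q ∈ Ω)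
    {pk qk : ℕ → EuclideanSpace ℝ (Fin n)}
    (hpk : Tendsto pk atTop (nhds p)) (hqk : Tendsto qk atTop (nhds q)) :
    Tendsto (fun k => hd Ω (pk k) (qk k)) atTop (nhds (hd Ω p q)) := by
  have h1 : Tendsto (fun k => gauge (tset Ω (pk k)) (pk k - qk k)) atTop
      (nhds (gauge (tset Ω p) (p - q))) := tendsto_gauge hΩo hΩc hp hpk (hpk.sub hqk)
  have h2 : Tendsto (fun k => gauge (tset Ω (pk k)) (qk k - pk k)) atTop
      (nhds (gauge (tset Ω p) (q - p))) := tendsto_gauge hΩo hΩc hp hpk (hqk.sub hpk)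
  have hden : 0 < 1 - gauge (tset Ω p) (q - p) := one_sub_gauge_pos hΩo hq
  have hnum : 0 < 1 + gauge (tset Ω p) (p - q) := by
    have := gauge_nonneg (s := tset Ω p) (p - q); linarith
  unfold hd
  refine Tendsto.const_mul _ (Filter.Tendsto.log ?_ (div_pos hnum hden).ne')
  exact ((tendsto_const_nhds.add h1).div (tendsto_const_nhds.sub h2) hden.ne')

lemma norm_sub_le_of_hd {C : ℝ} (hΩo : IsOpen Ω) (hC : Ω ⊆ closedBall 0 C) (hC0 : 0 < C)
    (hp : p ∈ Ω) (hq : q ∈ Ω) :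
    ‖q - p‖ ≤ 2 * C * (Real.exp (2 * hd Ω p q) - 1) := by
  have hga := norm_div_le_gauge hΩo hC hC0 hp (p - q)
  have hden := one_sub_gauge_pos hΩo hq (p := p)
  have hgb0 := gauge_nonneg (s := tset Ω p) (q - p)
  have h1 : 1 + gauge (tset Ω p) (p - q) ≤ Real.exp (2 * hd Ω p q) := by
    rw [exp_two_hd hΩo hq]
    rw [le_div_iff₀ hden]
    have hga0 := gauge_nonneg (s := tset Ω p) (p - q)
    nlinarith
  have h2 : ‖q - p‖ / (2*C) ≤ Real.exp (2 * hd Ω p q) - 1 := by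
    rw [norm_sub_rev]; linarith
  rw [div_le_iff₀ (by linarith : (0:ℝ) < 2*C)] at h2
  linarith

lemma gauge_le_of_hd_le (hΩo : IsOpen Ω) (hq : q ∈ Ω) {R : ℝ} (h : hd Ω p q ≤ R) :
    gauge (tset Ω p) (q - p) ≤ 1 - Real.exp (-(2*R)) := by
  have hden := one_sub_gauge_pos hΩo hq (p := p)
  have hga0 := gauge_nonneg (s := tset Ω p) (p - q)
  have he : (1 + gauge (tset Ω p) (p - q)) / (1 - gauge (tset Ω p) (q - p))
      ≤ Real.exp (2*R) := by
    rw [← exp_two_hd hΩo hq]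
    exact Real.exp_le_exp.2 (by linarith)
  rw [div_le_iff₀ hden] at he
  have hE : 0 < Real.exp (2*R) := Real.exp_pos _
  have h1 : 1 ≤ Real.exp (2*R) * (1 - gauge (tset Ω p) (q - p)) := by linarith
  have h2 : (Real.exp (2*R))⁻¹ ≤ 1 - gauge (tset Ω p) (q - p) := by
    rw [inv_le_iff_one_le_mul₀ hE]
    linarith [mul_comm (Real.exp (2*R)) (1 - gauge (tset Ω p) (q - p))]
  rw [Real.exp_neg]
  linarith

lemma infDist_compl_ge {C : ℝ} (hΩo : IsOpen Ω) (hΩc : Convex ℝ Ω)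
    (hC : Ω ⊆ closedBall 0 C) (hC0 : 0 < C) (hp : p ∈ Ω) (hq : q ∈ Ω) :
    (1 - gauge (tset Ω p) (q - p)) * infDist p Ωᶜ ≤ infDist q Ωᶜ := by
  set s := gauge (tset Ω p) (q - p) with hs_def
  have hs0 : 0 ≤ s := gauge_nonneg _
  have hs1 : s < 1 := gauge_lt_one_of_mem hΩo hq
  set ρ := infDist p Ωᶜ with hρ_def
  have hρ0 : 0 ≤ ρ := infDist_nonneg
  rcases eq_empty_or_nonempty Ωᶜ with he | hne
  · rw [hρ_def, he, infDist_empty, infDist_empty, mul_zero]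
  have hball : ball p ρ ⊆ Ω := ball_infDist_compl_subset
  have hclaim : ∀ z, dist q z < (1 - s) * ρ → z ∈ Ω := by
    intro z hz
    by_cases hs' : s = 0
    · have hqp : q = p := by
        have h := norm_div_le_gauge hΩo hC hC0 hp (q - p)
        rw [← hs_def, hs'] at h
        have : ‖q - p‖ ≤ 0 := by
          have h2C : (0:ℝ) < 2*C := by linarith
          by_contra hgt
          push_neg at hgt
          have := (div_pos hgt h2C)
          linarith
        have := le_antisymm this (norm_nonneg _)
        exact sub_eq_zero.1 (by rwa [norm_eq_zero] at this)
      apply hball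
      rw [mem_ball, dist_comm]
      rw [hqp, hs'] at hz
      simpa using hz
    · have hs0' : 0 < s := lt_of_le_of_ne hs0 (Ne.symm hs')
      have h1s : 0 < 1 - s := by linarith
      set w := z - q with hw_def
      have hwn : ‖w‖ < (1 - s) * ρ := by rw [hw_def, ← dist_eq_norm, dist_comm]; exact hz
      have hz1 : p + (1 - s)⁻¹ • w ∈ Ω := by
        apply hball
        rw [mem_ball, dist_eq_norm, add_sub_cancel_left, norm_smul,
          Real.norm_of_nonneg (inv_nonneg.2 h1s.le)]
        rw [inv_mul_lt_iff₀ h1s]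
        linarith [hwn]
      have hz2 : p + s⁻¹ • (q - p) ∈ closure Ω :=
        mem_closure_of_gauge_le hΩo hΩc hp hs0' le_rfl
      have hcombo : z = (1 - s) • (p + (1 - s)⁻¹ • w) + s • (p + s⁻¹ • (q - p)) := by
        rw [hw_def]
        match_scalars <;> field_simp <;> ring
      have := hΩc.combo_interior_closure_mem_interior
        (by rw [hΩo.interior_eq]; exact hz1) hz2 h1s hs0 (by ring)
      rw [hΩo.interior_eq] at this
      rw [hcombo]
      exact this
  by_contra hlt
  obtain ⟨z, hzc, hzd⟩ := (infDist_lt_iff hne).1 (not_le.1 hlt)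
  exact hzc (hclaim z hzd)

lemma eq_of_gauge_segment (hΩo : IsOpen Ω) (hΩc : Convex ℝ Ω)
    (hstrict : ∀ a ∈ frontier Ω, ∀ b ∈ frontier Ω,
      openSegment ℝ a b ⊆ frontier Ω → a = b)
    (hp : p ∈ Ω) {u w : EuclideanSpace ℝ (Fin n)} {t : ℝ}
    (hu : gauge (tset Ω p) u = 1) (hw : gauge (tset Ω p) w = 1)
    (ht0 : 0 < t) (ht1 : t < 1)
    (hmid : gauge (tset Ω p) ((1 - t) • u + t • w) = 1) : u = w := by
  have key : ∀ r : ℝ, 0 < r → r < 1 → gauge (tset Ω p) ((1 - r) • u + r • w) = 1 := by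
    intro r hr0 hr1
    have hle : gauge (tset Ω p) ((1 - r) • u + r • w) ≤ 1 := by
      have := gauge_convex_combo hΩo hΩc hp (u := u) (w := w) (by linarith : (0:ℝ) ≤ 1 - r) hr0.le
      rw [hu, hw] at this
      linarith
    refine le_antisymm hle ?_
    rcases lt_trichotomy r t with hrt | rfl | hrt
    · set lam := (t - r) / (1 - r) with hlam
      have hl0 : 0 < lam := div_pos (by linarith) (by linarith)
      have hl1 : lam < 1 := (div_lt_one (by linarith)).2 (by linarith)
      have h1r : (1:ℝ) - r ≠ 0 := by linarith
      have hcombo : (1 - t) • u + t • w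
          = (1 - lam) • ((1 - r) • u + r • w) + lam • w := by
        rw [hlam]; match_scalars <;> field_simp <;> ring
      have hineq := gauge_convex_combo hΩo hΩc hp
        (u := (1 - r) • u + r • w) (w := w) (by linarith : (0:ℝ) ≤ 1 - lam) hl0.le
      rw [← hcombo, hmid, hw] at hineq
      nlinarith
    · rw [hmid]
    · set lam := (r - t) / r with hlam
      have hl0 : 0 < lam := div_pos (by linarith) (by linarith)
      have hl1 : lam < 1 := (div_lt_one (by linarith)).2 (by linarith)
      have hr0' : (r:ℝ) ≠ 0 := by linarith
      have hcombo : (1 - t) • u + t • w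
          = lam • u + (1 - lam) • ((1 - r) • u + r • w) := by
        rw [hlam]; match_scalars <;> field_simp <;> ring
      have hineq := gauge_convex_combo hΩo hΩc hp
        (u := u) (w := (1 - r) • u + r • w) hl0.le (by linarith : (0:ℝ) ≤ 1 - lam)
      rw [← hcombo, hmid, hu] at hineq
      nlinarith
  have hfr : ∀ x : EuclideanSpace ℝ (Fin n),
      gauge (tset Ω p) x = 1 → p + x ∈ frontier Ω := by
    intro x hx
    have := (gauge_eq_one_iff_mem_frontier (tset_convex hΩc) (tset_mem_nhds hΩo hp)).1 hx
    rwa [tset_frontier] at this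
  have hsub : openSegment ℝ (p + u) (p + w) ⊆ frontier Ω := by
    intro z hz
    rw [openSegment_eq_image] at hz
    obtain ⟨r, ⟨hr0, hr1⟩, rfl⟩ := hz
    dsimp only
    have hz' : (1 - r) • (p + u) + r • (p + w) = p + ((1 - r) • u + r • w) := by module
    rw [hz']
    exact hfr _ (key r hr0 hr1)
  have := hstrict (p + u) (hfr u hu) (p + w) (hfr w hw) hsub
  exact add_left_cancel this

/-- Uniqueness of the closest point. -/
lemma closest_unique {C : ℝ} (hΩo : IsOpen Ω) (hΩc : Convex ℝ Ω)
    (hC : Ω ⊆ closedBall 0 C) (hC0 : 0 < C)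
    (hstrict : ∀ a ∈ frontier Ω, ∀ b ∈ frontier Ω,
      openSegment ℝ a b ⊆ frontier Ω → a = b)
    {K : Set (EuclideanSpace ℝ (Fin n))} (hKΩ : K ⊆ Ω) (hKc : Convex ℝ K)
    {x : EuclideanSpace ℝ (Fin n)} (hx : x ∈ Ω)
    {y₀ y₁ : EuclideanSpace ℝ (Fin n)} (h₀K : y₀ ∈ K) (h₁K : y₁ ∈ K)
    (min₀ : ∀ z ∈ K, hd Ω x y₀ ≤ hd Ω x z) (min₁ : ∀ z ∈ K, hd Ω x y₁ ≤ hd Ω x z) :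
    y₀ = y₁ := by
  have h₀Ω := hKΩ h₀K
  have h₁Ω := hKΩ h₁K
  have hm : hd Ω x y₀ = hd Ω x y₁ := le_antisymm (min₀ _ h₁K) (min₁ _ h₀K)
  have hm0 : 0 ≤ hd Ω x y₀ := hd_nonneg hΩo h₀Ω
  have hA₀ : gauge (tset Ω x) (x - y₀) = gauge (tset Ω x) (x - y₀) := rfl
  set A₀ := gauge (tset Ω x) (x - y₀) with hA₀_def
  set A₁ := gauge (tset Ω x) (x - y₁) with hA₁_def
  set B₀ := gauge (tset Ω x) (y₀ - x) with hB₀_def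
  set B₁ := gauge (tset Ω x) (y₁ - x) with hB₁_def
  have hB₀1 : B₀ < 1 := gauge_lt_one_of_mem hΩo h₀Ω
  have hB₁1 : B₁ < 1 := gauge_lt_one_of_mem hΩo h₁Ω
  have hA₀0 : 0 ≤ A₀ := gauge_nonneg _
  have hA₁0 : 0 ≤ A₁ := gauge_nonneg _
  have hB₀0 : 0 ≤ B₀ := gauge_nonneg _
  have hB₁0 : 0 ≤ B₁ := gauge_nonneg _
  set M := Real.exp (2 * hd Ω x y₀) with hM_def
  have hM1 : 1 ≤ M := by
    rw [hM_def, ← Real.exp_zero]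
    exact Real.exp_le_exp.2 (by linarith)
  have hlin₀ : A₀ + M * B₀ = M - 1 := by
    have h := exp_two_hd hΩo h₀Ω (p := x)
    rw [← hA₀_def, ← hB₀_def, ← hM_def] at h
    rw [eq_div_iff (by linarith : 1 - B₀ ≠ 0)] at h
    linear_combination -h
  have hlin₁ : A₁ + M * B₁ = M - 1 := by
    have h := exp_two_hd hΩo h₁Ω (p := x)
    rw [← hm, ← hA₁_def, ← hB₁_def, ← hM_def] at h
    rw [eq_div_iff (by linarith : 1 - B₁ ≠ 0)] at h
    linear_combination -h
  -- the midpoint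
  set y : EuclideanSpace ℝ (Fin n) := (1/2 : ℝ) • y₀ + (1/2 : ℝ) • y₁ with hy_def
  have hyK : y ∈ K := hKc h₀K h₁K (by norm_num) (by norm_num) (by norm_num)
  have hyΩ : y ∈ Ω := hKΩ hyK
  have hysub : y - x = (1/2 : ℝ) • (y₀ - x) + (1/2 : ℝ) • (y₁ - x) := by
    rw [hy_def]; module
  have hxsub : x - y = (1/2 : ℝ) • (x - y₀) + (1/2 : ℝ) • (x - y₁) := by
    rw [hy_def]; module
  set Ab := gauge (tset Ω x) (x - y) with hAb_def
  set Bb := gauge (tset Ω x) (y - x) with hBb_def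
  have hAble : Ab ≤ (A₀ + A₁) / 2 := by
    have h := gauge_convex_combo hΩo hΩc hx (u := x - y₀) (w := x - y₁)
      (by norm_num : (0:ℝ) ≤ 1/2) (by norm_num : (0:ℝ) ≤ 1/2)
    rw [← hxsub, ← hA₀_def, ← hA₁_def, ← hAb_def] at h
    linarith
  have hBble : Bb ≤ (B₀ + B₁) / 2 := by
    have h := gauge_convex_combo hΩo hΩc hx (u := y₀ - x) (w := y₁ - x)
      (by norm_num : (0:ℝ) ≤ 1/2) (by norm_num : (0:ℝ) ≤ 1/2)
    rw [← hysub, ← hB₀_def, ← hB₁_def, ← hBb_def] at h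
    linarith
  have hBb1 : Bb < 1 := gauge_lt_one_of_mem hΩo hyΩ
  have hAb0 : 0 ≤ Ab := gauge_nonneg _
  have hmy : hd Ω x y₀ ≤ hd Ω x y := min₀ _ hyK
  have hMy : M ≤ (1 + Ab) / (1 - Bb) := by
    have h := exp_two_hd hΩo hyΩ (p := x)
    rw [← hAb_def, ← hBb_def] at h
    rw [← h, hM_def]
    exact Real.exp_le_exp.2 (by linarith)
  have hlinb : M - 1 ≤ Ab + M * Bb := by
    rw [le_div_iff₀ (by linarith : (0:ℝ) < 1 - Bb)] at hMy
    have hexp : M * (1 - Bb) = M - M * Bb := by ring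
    linarith
  have hMB : M * Bb ≤ M * ((B₀ + B₁) / 2) :=
    mul_le_mul_of_nonneg_left hBble (by linarith)
  have hMBeq : M * Bb = M * ((B₀ + B₁) / 2) := by
    apply le_antisymm hMB
    linarith
  have hBbeq : Bb = (B₀ + B₁) / 2 := mul_left_cancel₀ (by linarith : M ≠ 0) hMBeq
  have hAbeq : Ab = (A₀ + A₁) / 2 := by
    apply le_antisymm hAble
    linarith
  have hnormzero : ∀ z : EuclideanSpace ℝ (Fin n), gauge (tset Ω x) (z - x) = 0 → z = x := by
    intro z hz
    have h := norm_div_le_gauge hΩo hC hC0 hx (z - x)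
    rw [hz] at h
    have hle : ‖z - x‖ ≤ 0 := by
      by_contra hgt; push_neg at hgt
      have := div_pos hgt (by linarith : (0:ℝ) < 2*C); linarith
    have := le_antisymm hle (norm_nonneg _)
    exact sub_eq_zero.1 (by rwa [norm_eq_zero] at this)
  rcases eq_or_lt_of_le hm0 with hm0' | hm0'
  · -- the minimum is zero : both points equal x
    have hMeq : M = 1 := by rw [hM_def, ← hm0', mul_zero, Real.exp_zero]
    rw [hMeq] at hlin₀ hlin₁
    have hB₀z : B₀ = 0 := by linarith
    have hB₁z : B₁ = 0 := by linarith
    rw [hnormzero y₀ (by rw [← hB₀_def]; exact hB₀z),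
      hnormzero y₁ (by rw [← hB₁_def]; exact hB₁z)]
  · -- the minimum is positive
    have hM1' : 1 < M := by
      rw [hM_def, ← Real.exp_zero]
      exact Real.exp_lt_exp.2 (by linarith)
    have hB₀p : 0 < B₀ := by
      rcases lt_or_eq_of_le hB₀0 with h | h
      · exact h
      · exfalso
        have h₀ : y₀ = x := hnormzero y₀ (by rw [← hB₀_def]; exact h.symm)
        have : hd Ω x y₀ = 0 := by rw [h₀, hd_self]
        linarith
    have hB₁p : 0 < B₁ := by
      rcases lt_or_eq_of_le hB₁0 with h | h
      · exact h
      · exfalso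
        have h₁ : y₁ = x := hnormzero y₁ (by rw [← hB₁_def]; exact h.symm)
        have : hd Ω x y₀ = 0 := by rw [hm, h₁, hd_self]
        linarith
    set u : EuclideanSpace ℝ (Fin n) := B₀⁻¹ • (y₀ - x) with hu_def
    set w : EuclideanSpace ℝ (Fin n) := B₁⁻¹ • (y₁ - x) with hw_def
    have hgu : gauge (tset Ω x) u = 1 := by
      rw [hu_def, gauge_smul_of_nonneg (inv_nonneg.2 hB₀p.le), smul_eq_mul,
        ← hB₀_def, inv_mul_cancel₀ hB₀p.ne']
    have hgw : gauge (tset Ω x) w = 1 := by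
      rw [hw_def, gauge_smul_of_nonneg (inv_nonneg.2 hB₁p.le), smul_eq_mul,
        ← hB₁_def, inv_mul_cancel₀ hB₁p.ne']
    set t : ℝ := B₁ / (B₀ + B₁) with ht_def
    have hsum : 0 < B₀ + B₁ := by linarith
    have ht0 : 0 < t := div_pos hB₁p hsum
    have ht1 : t < 1 := (div_lt_one hsum).2 (by linarith)
    have hBbp : 0 < Bb := by rw [hBbeq]; linarith
    have hmidv : (1 - t) • u + t • w = Bb⁻¹ • (y - x) := by
      rw [ht_def, hu_def, hw_def, hBbeq, hysub]
      match_scalars <;> field_simp <;> ring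
    have hgmid : gauge (tset Ω x) ((1 - t) • u + t • w) = 1 := by
      rw [hmidv, gauge_smul_of_nonneg (inv_nonneg.2 hBbp.le), smul_eq_mul,
        ← hBb_def, inv_mul_cancel₀ hBbp.ne']
    have huw : u = w := eq_of_gauge_segment hΩo hΩc hstrict hx hgu hgw ht0 ht1 hgmid
    have hv₁ : y₁ - x = (B₁ * B₀⁻¹) • (y₀ - x) := by
      have h : B₁ • u = B₁ • w := by rw [huw]
      rw [hu_def, hw_def, smul_smul, smul_smul, mul_inv_cancel₀ hB₁p.ne', one_smul] at h
      exact h.symm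
    have hc0 : 0 < B₁ * B₀⁻¹ := by positivity
    have hA₁c : A₁ = (B₁ * B₀⁻¹) * A₀ := by
      have hxy : x - y₁ = (B₁ * B₀⁻¹) • (x - y₀) := by
        rw [← neg_sub y₁ x, hv₁]; module
      rw [hA₁_def, hxy, gauge_smul_of_nonneg hc0.le, smul_eq_mul, ← hA₀_def]
    have hB₁c : B₁ * B₀⁻¹ * B₀ = B₁ := by field_simp
    have hc1 : B₁ * B₀⁻¹ = 1 := by
      have h2 : (B₁ * B₀⁻¹) * (A₀ + M * B₀) = M - 1 := by
        rw [← hlin₁, hA₁c]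
        linear_combination M * hB₁c
      rw [hlin₀] at h2
      have hne : M - 1 ≠ 0 := by linarith
      have h3 : B₁ * B₀⁻¹ * (M - 1) = 1 * (M - 1) := by rw [h2, one_mul]
      exact mul_right_cancel₀ hne h3
    have : y₁ - x = y₀ - x := by rw [hv₁, hc1, one_smul]
    exact (sub_left_injective.eq_iff.1 this).symm

/-- Existence of a closest point. -/
lemma closest_exists {C : ℝ} (hΩo : IsOpen Ω) (hΩc : Convex ℝ Ω)
    (hC : Ω ⊆ closedBall 0 C) (hC0 : 0 < C)
    {K : Set (EuclideanSpace ℝ (Fin n))} (hKΩ : K ⊆ Ω) (hKne : K.Nonempty)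
    (hKcl' : ∀ x ∈ Ω, ∀ u : ℕ → EuclideanSpace ℝ (Fin n), (∀ m, u m ∈ K) →
      Tendsto (fun m => hd Ω x (u m)) atTop (nhds 0) → x ∈ K)
    {x : EuclideanSpace ℝ (Fin n)} (hx : x ∈ Ω) :
    ∃ y ∈ K, ∀ z ∈ K, hd Ω x y ≤ hd Ω x z := by
  obtain ⟨z₀, hz₀⟩ := hKne
  set S := (fun z => hd Ω x z) '' K with hS_def
  have hSne : S.Nonempty := ⟨_, ⟨z₀, hz₀, rfl⟩⟩
  have hSbd : BddBelow S := ⟨0, by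
    rintro s ⟨z, hzK, rfl⟩
    exact hd_nonneg hΩo (hKΩ hzK)⟩
  set m := sInf S with hm_def
  have hm0 : 0 ≤ m := le_csInf hSne (by rintro s ⟨z, hzK, rfl⟩; exact hd_nonneg hΩo (hKΩ hzK))
  have hseq : ∀ k : ℕ, ∃ z, z ∈ K ∧ hd Ω x z < m + 1/(k+1) := by
    intro k
    have hlt : m < m + 1/(k+1 : ℝ) := by
      have : (0:ℝ) < 1/(k+1 : ℝ) := by positivity
      linarith
    obtain ⟨s, hsS, hs⟩ := exists_lt_of_csInf_lt hSne hlt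
    obtain ⟨z, hzK, rfl⟩ := hsS
    exact ⟨z, hzK, hs⟩
  choose u huK hud using hseq
  have hub : ∀ k, hd Ω x (u k) ≤ m + 1 := by
    intro k
    refine le_trans (hud k).le ?_
    have h1 : (1:ℝ)/(k+1 : ℝ) ≤ 1 := by
      rw [div_le_one (by positivity)]
      have : (0:ℝ) ≤ (k:ℝ) := Nat.cast_nonneg k
      linarith
    linarith
  set c : ℝ := 1 - Real.exp (-(2*(m+1))) with hc_def
  have hc1 : c < 1 := by
    have := Real.exp_pos (-(2*(m+1))); rw [hc_def]; linarith
  have huA : ∀ k, gauge (tset Ω x) (u k - x) ≤ c := fun k =>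
    gauge_le_of_hd_le hΩo (hKΩ (huK k)) (hub k)
  set A := {z : EuclideanSpace ℝ (Fin n) | gauge (tset Ω x) (z - x) ≤ c} with hA_def
  have hAclosed : IsClosed A := isClosed_le
    ((continuous_gauge (tset_convex hΩc) (tset_mem_nhds hΩo hx)).comp
      (continuous_id.sub continuous_const)) continuous_const
  have hAbdd : Bornology.IsBounded A := by
    apply (isBounded_closedBall (x := x) (r := 2*C)).subset
    intro z hz
    have h := norm_div_le_gauge hΩo hC hC0 hx (z - x)
    have h2C : (0:ℝ) < 2*C := by linarith
    have : ‖z - x‖ ≤ 2*C := by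
      rw [div_le_iff₀ h2C] at h
      have hcle : gauge (tset Ω x) (z - x) ≤ c := hz
      have h2 : gauge (tset Ω x) (z - x) * (2*C) ≤ 1 * (2*C) :=
        mul_le_mul_of_nonneg_right (le_trans hcle hc1.le) h2C.le
      linarith
    simpa [mem_closedBall, dist_eq_norm] using this
  have hAcomp : IsCompact A := isCompact_of_isClosed_isBounded hAclosed hAbdd
  have hAΩ : A ⊆ Ω := fun z hz =>
    mem_of_gauge_lt_one hΩo hΩc hx (lt_of_le_of_lt hz hc1)
  obtain ⟨y, hyA, φ, hφmono, hφtend⟩ := hAcomp.tendsto_subseq (fun k => huA k)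
  have hyΩ : y ∈ Ω := hAΩ hyA
  have hlim : Tendsto (fun k => hd Ω x (u k)) atTop (nhds m) := by
    have hupper : Tendsto (fun k : ℕ => m + 1/(k+1 : ℝ)) atTop (nhds m) := by
      have : Tendsto (fun k : ℕ => 1 / ((k : ℝ) + 1)) atTop (nhds 0) :=
        tendsto_one_div_add_atTop_nhds_zero_nat
      have h2 := tendsto_const_nhds (x := m) (f := atTop (α := ℕ)) |>.add this
      simpa using h2
    refine tendsto_of_tendsto_of_tendsto_of_le_of_le tendsto_const_nhds hupper ?_ ?_
    · exact fun k => csInf_le hSbd ⟨u k, huK k, rfl⟩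
    · exact fun k => (hud k).le
  have hsub : Tendsto (fun k => hd Ω x (u (φ k))) atTop (nhds m) :=
    hlim.comp hφmono.tendsto_atTop
  have hcont : Tendsto (fun k => hd Ω x (u (φ k))) atTop (nhds (hd Ω x y)) :=
    tendsto_hd hΩo hΩc hx hyΩ tendsto_const_nhds hφtend
  have hmeq : hd Ω x y = m := tendsto_nhds_unique hcont hsub
  have hyK : y ∈ K := by
    refine hKcl' y hyΩ (u ∘ φ) (fun k => huK (φ k)) ?_
    have := tendsto_hd hΩo hΩc hyΩ hyΩ (tendsto_const_nhds (x := y)) hφtend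
    rw [hd_self] at this
    exact this
  exact ⟨y, hyK, fun z hzK => hmeq ▸ csInf_le hSbd ⟨z, hzK, rfl⟩⟩

end HilbertAux

open HilbertAux Metric Set Filter in
/-- Let `Ω ⊆ ℝⁿ` be a bounded open strictly convex set with the Hilbert
metric `dΩ`, and `K ⊆ Ω` a nonempty convex subset which is closed in `(Ω, dΩ)`. Then
every `x ∈ Ω` has a unique closest point in `K`, and the resulting closest point
projection `Ω → K` is continuous (with respect to the Hilbert metric). -/
theorem hilbert_proj_convex_exists_unique_continuous
    {n : ℕ} (Ω : Set (EuclideanSpace ℝ (Fin n)))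
    (hΩo : IsOpen Ω) (hΩb : Bornology.IsBounded Ω) (hΩc : Convex ℝ Ω)
    (hstrict : ∀ a ∈ frontier Ω, ∀ b ∈ frontier Ω,
      openSegment ℝ a b ⊆ frontier Ω → a = b)
    (dΩ : EuclideanSpace ℝ (Fin n) → EuclideanSpace ℝ (Fin n) → ℝ)
    (hcr : ∀ x ∈ Ω, ∀ y ∈ Ω, ∀ a b : EuclideanSpace ℝ (Fin n),
      a ∈ frontier Ω → b ∈ frontier Ω → x ≠ y →
      x ∈ segment ℝ a y → y ∈ segment ℝ x b →
      dΩ x y = (1/2) * |Real.log ((dist a y * dist b x) / (dist a x * dist b y))|)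
    (hd0 : ∀ x ∈ Ω, dΩ x x = 0)
    (K : Set (EuclideanSpace ℝ (Fin n))) (hKΩ : K ⊆ Ω) (hKne : K.Nonempty)
    (hKc : Convex ℝ K)
    -- `K` is closed as a subset of `(Ω, dΩ)`
    (hKcl : ∀ x ∈ Ω, ∀ u : ℕ → EuclideanSpace ℝ (Fin n), (∀ m, u m ∈ K) →
      Filter.Tendsto (fun m => dΩ x (u m)) Filter.atTop (nhds 0) → x ∈ K) :
    ∃ proj : EuclideanSpace ℝ (Fin n) → EuclideanSpace ℝ (Fin n),
      (∀ x ∈ Ω, proj x ∈ K ∧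
        (∀ z ∈ K, dΩ x (proj x) ≤ dΩ x z) ∧
        (∀ y ∈ K, (∀ z ∈ K, dΩ x y ≤ dΩ x z) → y = proj x)) ∧
      (∀ x ∈ Ω, ∀ ε > (0:ℝ), ∃ η > (0:ℝ), ∀ x' ∈ Ω,
        dΩ x x' < η → dΩ (proj x) (proj x') < ε) := by
  classical
  obtain ⟨k₀, hk₀⟩ := hKne
  rcases subsingleton_or_nontrivial (EuclideanSpace ℝ (Fin n)) with hsub | hnt
  · -- trivial case : the whole space is a single point
    refine ⟨fun _ => k₀, ?_, ?_⟩
    · intro x hx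
      refine ⟨hk₀, ?_, ?_⟩
      · intro z hz
        rw [Subsingleton.elim z x, Subsingleton.elim k₀ x]
      · intro y hy _
        exact Subsingleton.elim y k₀
    · intro x hx ε hε
      refine ⟨1, one_pos, fun x' hx' _ => ?_⟩
      rw [Subsingleton.elim k₀ x, hd0 x hx]
      exact hε
  -- main case
  obtain ⟨C, hC0, hC⟩ := hΩb.subset_closedBall_lt 0 0
  have hdd : ∀ p ∈ Ω, ∀ q ∈ Ω, dΩ p q = hd Ω p q := fun p hp q hq =>
    dist_eq_hd hΩo hΩb hΩc dΩ hcr hd0 hp hq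
  have hKcl' : ∀ x ∈ Ω, ∀ u : ℕ → EuclideanSpace ℝ (Fin n), (∀ m, u m ∈ K) →
      Tendsto (fun m => hd Ω x (u m)) atTop (nhds 0) → x ∈ K := by
    intro x hx u huK htend
    apply hKcl x hx u huK
    have he : (fun m => dΩ x (u m)) = fun m => hd Ω x (u m) :=
      funext fun m => hdd x hx (u m) (hKΩ (huK m))
    rw [he]
    exact htend
  have hex : ∀ x, x ∈ Ω → ∃ y, y ∈ K ∧ ∀ z ∈ K, hd Ω x y ≤ hd Ω x z := by
    intro x hx
    obtain ⟨y, hyK, hymin⟩ := closest_exists hΩo hΩc hC hC0 hKΩ ⟨k₀, hk₀⟩ hKcl' hx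
    exact ⟨y, hyK, hymin⟩
  set proj : EuclideanSpace ℝ (Fin n) → EuclideanSpace ℝ (Fin n) :=
    fun x => if hx : x ∈ Ω then (hex x hx).choose else k₀ with hproj_def
  have hprojK : ∀ x, ∀ hx : x ∈ Ω, proj x ∈ K := by
    intro x hx
    rw [hproj_def]
    simp only [dif_pos hx]
    exact (hex x hx).choose_spec.1
  have hprojmin : ∀ x, ∀ hx : x ∈ Ω, ∀ z ∈ K, hd Ω x (proj x) ≤ hd Ω x z := by
    intro x hx
    rw [hproj_def]
    simp only [dif_pos hx]
    exact (hex x hx).choose_spec.2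
  refine ⟨proj, ?_, ?_⟩
  · intro x hx
    refine ⟨hprojK x hx, ?_, ?_⟩
    · intro z hz
      rw [hdd x hx (proj x) (hKΩ (hprojK x hx)), hdd x hx z (hKΩ hz)]
      exact hprojmin x hx z hz
    · intro y hyK hymin
      refine closest_unique hΩo hΩc hC hC0 hstrict hKΩ hKc hx hyK (hprojK x hx) ?_
        (hprojmin x hx)
      intro z hz
      have h := hymin z hz
      rw [hdd x hx y (hKΩ hyK), hdd x hx z (hKΩ hz)] at h
      exact h
  · -- continuity of the projection
    intro x hx ε hε
    by_contra hcon
    push_neg at hcon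
    have hseq : ∀ k : ℕ, ∃ x', x' ∈ Ω ∧ dΩ x x' < 1/(k+1) ∧ ε ≤ dΩ (proj x) (proj x') := by
      intro k
      obtain ⟨x', hx'Ω, h1, h2⟩ := hcon (1/(k+1 : ℝ)) (by positivity)
      exact ⟨x', hx'Ω, h1, h2⟩
    choose xk hxkΩ hxkd hxkε using hseq
    set y := proj x with hy_def
    have hyK : y ∈ K := hprojK x hx
    have hyΩ : y ∈ Ω := hKΩ hyK
    set yk : ℕ → EuclideanSpace ℝ (Fin n) := fun k => proj (xk k) with hyk_def
    have hykK : ∀ k, yk k ∈ K := fun k => hprojK (xk k) (hxkΩ k)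
    have hykΩ : ∀ k, yk k ∈ Ω := fun k => hKΩ (hykK k)
    have hykmin : ∀ k, ∀ z ∈ K, hd Ω (xk k) (yk k) ≤ hd Ω (xk k) z := fun k =>
      hprojmin (xk k) (hxkΩ k)
    -- Step 1 : Euclidean convergence of xk to x
    have hxk : Tendsto xk atTop (nhds x) := by
      rw [tendsto_iff_dist_tendsto_zero]
      have hupper : Tendsto (fun k : ℕ => 2*C*(Real.exp (2*(1/(k+1 : ℝ))) - 1)) atTop
          (nhds 0) := by
        have h1 : Tendsto (fun k : ℕ => 2*(1/(k+1 : ℝ))) atTop (nhds 0) := by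
          simpa using (tendsto_one_div_add_atTop_nhds_zero_nat :
            Tendsto (fun k : ℕ => 1 / ((k : ℝ) + 1)) atTop (nhds 0)).const_mul 2
        have h2 : Tendsto (fun k : ℕ => Real.exp (2*(1/(k+1 : ℝ)))) atTop (nhds 1) := by
          simpa [Function.comp_def] using (Real.continuous_exp.tendsto 0).comp h1
        have h3 := (h2.sub (tendsto_const_nhds (x := (1:ℝ)))).const_mul (2*C)
        simpa using h3
      refine tendsto_of_tendsto_of_tendsto_of_le_of_le tendsto_const_nhds hupper
        (fun k => dist_nonneg) ?_
      intro k
      have hk1 : hd Ω x (xk k) ≤ 1/(k+1 : ℝ) := by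
        rw [← hdd x hx (xk k) (hxkΩ k)]
        exact (hxkd k).le
      have hb := norm_sub_le_of_hd hΩo hC hC0 hx (hxkΩ k)
      have hmono : Real.exp (2 * hd Ω x (xk k)) ≤ Real.exp (2*(1/(k+1 : ℝ))) :=
        Real.exp_le_exp.2 (by linarith)
      show dist (xk k) x ≤ 2*C*(Real.exp (2*(1/(k+1 : ℝ))) - 1)
      rw [dist_eq_norm]
      calc ‖xk k - x‖ ≤ 2*C*(Real.exp (2 * hd Ω x (xk k)) - 1) := hb
        _ ≤ 2*C*(Real.exp (2*(1/(k+1 : ℝ))) - 1) := by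
            apply mul_le_mul_of_nonneg_left (by linarith) (by linarith)
    -- Step 2 : the distances hd (xk k) y converge, hence are bounded
    have hdxky : Tendsto (fun k => hd Ω (xk k) y) atTop (nhds (hd Ω x y)) :=
      tendsto_hd hΩo hΩc hx hyΩ hxk tendsto_const_nhds
    set R := hd Ω x y + 1 with hR_def
    have hevR : ∀ᶠ k in atTop, hd Ω (xk k) y ≤ R := by
      have := hdxky.eventually (gt_mem_nhds (show hd Ω x y < R by rw [hR_def]; linarith))
      filter_upwards [this] with k hk using hk.le
    have hevRk : ∀ᶠ k in atTop, hd Ω (xk k) (yk k) ≤ R := by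
      filter_upwards [hevR] with k hk
      exact le_trans (hykmin k y hyK) hk
    -- Step 3 : the yk eventually lie in a fixed compact subset of Ω
    have hΩcne : Ωᶜ.Nonempty := by
      obtain ⟨w, hw⟩ := NormedSpace.exists_lt_norm ℝ (EuclideanSpace ℝ (Fin n)) C
      exact ⟨w, fun hwΩ => absurd (by simpa [mem_closedBall, dist_zero_right] using hC hwΩ)
        (not_le.2 hw)⟩
    have hρx : 0 < infDist x Ωᶜ := by
      obtain ⟨r, hr0, hrball⟩ := Metric.isOpen_iff.1 hΩo x hx
      by_contra hle
      push_neg at hle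
      obtain ⟨z, hzc, hzd⟩ := (infDist_lt_iff hΩcne).1 (lt_of_le_of_lt hle hr0)
      exact hzc (hrball (mem_ball'.2 hzd))
    set ρ : ℝ := infDist x Ωᶜ with hρ_def
    have hevx : ∀ᶠ k in atTop, ρ / 2 ≤ infDist (xk k) Ωᶜ := by
      have hball : ∀ᶠ k in atTop, dist (xk k) x < ρ/2 :=
        hxk (Metric.ball_mem_nhds x (by linarith))
      filter_upwards [hball] with k hk
      have := infDist_le_infDist_add_dist (x := x) (y := xk k) (s := Ωᶜ)
      rw [dist_comm] at hk
      linarith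
    set ρ' : ℝ := (ρ/2) * Real.exp (-(2*R)) with hρ'_def
    have hρ'0 : 0 < ρ' := by
      have := Real.exp_pos (-(2*R)); rw [hρ'_def]; positivity
    have hevyk : ∀ᶠ k in atTop, ρ' ≤ infDist (yk k) Ωᶜ := by
      filter_upwards [hevRk, hevx] with k hRk hxkd'
      have hg := gauge_le_of_hd_le hΩo (hykΩ k) hRk
      have hinf := infDist_compl_ge hΩo hΩc hC hC0 (hxkΩ k) (hykΩ k)
      have h1 : Real.exp (-(2*R)) ≤ 1 - gauge (tset Ω (xk k)) (yk k - xk k) := by linarith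
      have h2 : (0:ℝ) ≤ Real.exp (-(2*R)) := (Real.exp_pos _).le
      have h3 : 0 ≤ infDist (xk k) Ωᶜ := infDist_nonneg
      calc ρ' = Real.exp (-(2*R)) * (ρ/2) := by rw [hρ'_def]; ring
        _ ≤ (1 - gauge (tset Ω (xk k)) (yk k - xk k)) * infDist (xk k) Ωᶜ := by
            apply mul_le_mul h1 hxkd' (by linarith) (by linarith)
        _ ≤ infDist (yk k) Ωᶜ := hinf
    set A' : Set (EuclideanSpace ℝ (Fin n)) :=
      closedBall 0 C ∩ {z | ρ' ≤ infDist z Ωᶜ} with hA'_def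
    have hA'closed : IsClosed A' :=
      Metric.isClosed_closedBall.inter (isClosed_le continuous_const (continuous_infDist_pt Ωᶜ))
    have hA'bdd : Bornology.IsBounded A' :=
      isBounded_closedBall.subset fun z hz => hz.1
    have hA'comp : IsCompact A' := isCompact_of_isClosed_isBounded hA'closed hA'bdd
    have hA'Ω : A' ⊆ Ω := by
      intro z hz
      by_contra hzΩ
      have h0 : infDist z Ωᶜ = 0 := infDist_zero_of_mem hzΩ
      have h2 : ρ' ≤ infDist z Ωᶜ := hz.2
      rw [h0] at h2
      exact absurd h2 (not_le.2 hρ'0)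
    have hfreq : ∃ᶠ k in atTop, yk k ∈ A' := by
      apply Eventually.frequently
      filter_upwards [hevyk] with k hk
      exact ⟨hC (hykΩ k), hk⟩
    obtain ⟨w, hwA', φ, hφmono, hφtend⟩ := hA'comp.tendsto_subseq' hfreq
    have hwΩ : w ∈ Ω := hA'Ω hwA'
    -- Step 4 : w belongs to K
    have hwK : w ∈ K := by
      refine hKcl' w hwΩ (yk ∘ φ) (fun k => hykK (φ k)) ?_
      have := tendsto_hd hΩo hΩc hwΩ hwΩ (tendsto_const_nhds (x := w)) hφtend
      rw [hd_self] at this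
      exact this
    -- Step 5 : w is a closest point to x in K
    have hwmin : ∀ z ∈ K, hd Ω x w ≤ hd Ω x z := by
      intro z hzK
      have hl : Tendsto (fun k => hd Ω (xk (φ k)) (yk (φ k))) atTop (nhds (hd Ω x w)) :=
        tendsto_hd hΩo hΩc hx hwΩ (hxk.comp hφmono.tendsto_atTop) hφtend
      have hr : Tendsto (fun k => hd Ω (xk (φ k)) z) atTop (nhds (hd Ω x z)) :=
        tendsto_hd hΩo hΩc hx (hKΩ hzK) (hxk.comp hφmono.tendsto_atTop) tendsto_const_nhds
      exact le_of_tendsto_of_tendsto hl hr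
        (Eventually.of_forall fun k => hykmin (φ k) z hzK)
    -- Step 6 : by uniqueness, w = proj x
    have hwy : w = y :=
      closest_unique hΩo hΩc hC hC0 hstrict hKΩ hKc hx hwK hyK hwmin (hprojmin x hx)
    -- Step 7 : contradiction
    have hcontr : Tendsto (fun k => hd Ω y (yk (φ k))) atTop (nhds 0) := by
      have := tendsto_hd hΩo hΩc hyΩ hyΩ (tendsto_const_nhds (x := y)) (hwy ▸ hφtend)
      rw [hd_self] at this
      exact this
    have hev : ∀ᶠ k in atTop, hd Ω y (yk (φ k)) < ε := hcontr.eventually (gt_mem_nhds hε)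
    obtain ⟨k, hk⟩ := hev.exists
    have hεle : ε ≤ hd Ω y (yk (φ k)) := by
      have h := hxkε (φ k)
      rw [hdd y hyΩ (yk (φ k)) (hykΩ (φ k))] at h
      exact h
    linarith
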